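/- Let α₋₁, α₀, α₁, α₂, σ > 0 and κ, ρ > 1 with κ + 1 > 2ρ, and let f(x) = α₋₁x⁻¹ − α₀ + α₁x − α₂x^κ for x > 0. Then for every ϱ ∈ (1, ∞) there exists a constant C ∈ [0, ∞) such that for all x, y > 0: (ϱ/2)·ρ²σ⁴·(x^{2ρ−1} − y^{2ρ−1})² ≤ (f(x) − f(y))² + C (x − y)². -/

import Mathlib

set_option maxHeartbeats 1600000 in
/-- Monotonicity condition component involving the Milstein term for the Ait-Sahalia
model in the standard regime κ + 1 > 2ρ, with drift
f(x) = α₋₁x⁻¹ − α₀ + α₁x − α₂x^κ. -/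
theorem stmt_8 (αm1 α₀ α₁ α₂ σ κ ρ : ℝ)
    (hm1 : 0 < αm1) (h₀ : 0 < α₀) (h₁ : 0 < α₁) (h₂ : 0 < α₂) (hσ : 0 < σ)
    (hκ : 1 < κ) (hρ : 1 < ρ) (hreg : κ + 1 > 2 * ρ) :
    ∀ ϱ : ℝ, 1 < ϱ → ∃ C : ℝ, 0 ≤ C ∧
      ∀ x y : ℝ, 0 < x → 0 < y →
        (ϱ / 2) * ρ^2 * σ^4 * (x ^ (2 * ρ - 1) - y ^ (2 * ρ - 1))^2
          ≤ ((αm1 * x⁻¹ - α₀ + α₁ * x - α₂ * x ^ κ)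
              - (αm1 * y⁻¹ - α₀ + α₁ * y - α₂ * y ^ κ))^2
            + C * (x - y)^2 := by
  intro ϱ hϱ
  have hϱ0 : 0 < ϱ := lt_trans one_pos hϱ
  set a : ℝ := 2 * ρ - 1 with ha_def
  have ha1 : 1 < a := by simp only [ha_def]; linarith
  have ha0 : 0 < a := by linarith
  have haκ : a < κ := by simp only [ha_def]; linarith
  set K : ℝ := ϱ / 2 * ρ ^ 2 * σ ^ 4 with hK_def
  have hK : 0 < K := by positivity
  set δ : ℝ := α₂ / (2 * Real.sqrt K) with hδ_def
  have hsK : 0 < Real.sqrt K := Real.sqrt_pos.mpr hK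
  have hδ : 0 < δ := by positivity
  have hδsq : δ ^ 2 = α₂ ^ 2 / (4 * K) := by
    rw [hδ_def, div_pow, mul_pow, Real.sq_sqrt hK.le]
    norm_num
  set T : ℝ := (max (a / (δ * κ)) 1) ^ ((κ - a)⁻¹) with hT_def
  have hmax : (0:ℝ) < max (a / (δ * κ)) 1 := lt_of_lt_of_le one_pos (le_max_right _ _)
  have hT : 0 < T := Real.rpow_pos_of_pos hmax _
  have hTκa : T ^ (κ - a) = max (a / (δ * κ)) 1 :=
    Real.rpow_inv_rpow hmax.le (by linarith : κ - a ≠ 0)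
  set M : ℝ := a * T ^ (a - 1) with hM_def
  have hM : 0 < M := by positivity
  -- pointwise derivative bound
  have pointwise : ∀ t : ℝ, 0 < t → a * t ^ (a - 1) ≤ δ * (κ * t ^ (κ - 1)) + M := by
    intro t ht
    rcases le_total t T with h | h
    · have : t ^ (a - 1) ≤ T ^ (a - 1) := Real.rpow_le_rpow ht.le h (by linarith)
      have h2 : a * t ^ (a - 1) ≤ M := by
        rw [hM_def]; exact mul_le_mul_of_nonneg_left this ha0.le
      have h3 : 0 ≤ δ * (κ * t ^ (κ - 1)) := by positivity
      linarith
    · -- t ≥ T: a * t^(a-1) ≤ δ * κ * t^(κ-1)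
      have htκa : a / (δ * κ) ≤ t ^ (κ - a) := by
        calc a / (δ * κ) ≤ max (a / (δ * κ)) 1 := le_max_left _ _
          _ = T ^ (κ - a) := hTκa.symm
          _ ≤ t ^ (κ - a) := Real.rpow_le_rpow hT.le h (by linarith)
      have htpos : 0 < t ^ (κ - a) := Real.rpow_pos_of_pos ht _
      have haδκ : 0 < a / (δ * κ) := by positivity
      have hinv : t ^ (a - κ) ≤ δ * κ / a := by
        have e : t ^ (a - κ) = (t ^ (κ - a))⁻¹ := by
          rw [← Real.rpow_neg ht.le]; ring_nf
        rw [e]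
        calc (t ^ (κ - a))⁻¹ ≤ (a / (δ * κ))⁻¹ := inv_anti₀ haδκ htκa
          _ = δ * κ / a := inv_div _ _
      have hsplit : t ^ (a - 1) = t ^ (κ - 1) * t ^ (a - κ) := by
        rw [← Real.rpow_add ht]; ring_nf
      have hκ1 : (0:ℝ) ≤ t ^ (κ - 1) := (Real.rpow_pos_of_pos ht _).le
      have : a * t ^ (a - 1) ≤ δ * (κ * t ^ (κ - 1)) := by
        rw [hsplit]
        calc a * (t ^ (κ - 1) * t ^ (a - κ)) ≤ a * (t ^ (κ - 1) * (δ * κ / a)) := by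
              apply mul_le_mul_of_nonneg_left _ ha0.le
              exact mul_le_mul_of_nonneg_left hinv hκ1
          _ = δ * (κ * t ^ (κ - 1)) := by field_simp
      linarith [hM.le]
  -- monotonicity of H t = δ t^κ + M t - t^a on (0,∞)
  have hmono : ∀ x y : ℝ, 0 < y → y ≤ x →
      x ^ a - y ^ a ≤ δ * (x ^ κ - y ^ κ) + M * (x - y) := by
    intro x y hy hyx
    have hx : 0 < x := lt_of_lt_of_le hy hyx
    set H : ℝ → ℝ := fun t => δ * t ^ κ + M * t - t ^ a with hH_def
    have hder : ∀ t : ℝ, t ∈ interior (Set.Ioi (0:ℝ)) →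
        HasDerivAt H (δ * (κ * t ^ (κ - 1)) + M * 1 - a * t ^ (a - 1)) t := by
      intro t ht
      rw [interior_Ioi] at ht
      have h1 := (Real.hasDerivAt_rpow_const (p := κ) (Or.inl (ne_of_gt ht))).const_mul δ
      have h2 := (hasDerivAt_id t).const_mul M
      have h3 := Real.hasDerivAt_rpow_const (p := a) (x := t) (Or.inl (ne_of_gt ht))
      exact (h1.add h2).sub h3
    have hHmono : MonotoneOn H (Set.Ioi (0:ℝ)) := by
      apply monotoneOn_of_deriv_nonneg (convex_Ioi 0)
      · intro t ht
        exact ((hder t (by rwa [interior_Ioi])).continuousAt).continuousWithinAt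
      · intro t ht
        exact ((hder t ht).differentiableAt).differentiableWithinAt
      · intro t ht
        rw [(hder t ht).deriv]
        have := pointwise t (by rwa [interior_Ioi] at ht)
        linarith
    have := hHmono (Set.mem_Ioi.mpr hy) (Set.mem_Ioi.mpr hx) hyx
    simp only [hH_def] at this
    linarith
  clear_value a K δ T M
  refine ⟨α₁ ^ 2 + 2 * K * M ^ 2, by
    have h1 : (0:ℝ) ≤ 2 * K := by linarith
    have := mul_nonneg h1 (sq_nonneg M)
    have h2 := sq_nonneg α₁
    linarith, ?_⟩
  -- key inequality for ordered pair
  have key : ∀ x y : ℝ, 0 < y → y ≤ x →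
      K * (x ^ a - y ^ a) ^ 2
        ≤ ((αm1 * x⁻¹ - α₀ + α₁ * x - α₂ * x ^ κ)
            - (αm1 * y⁻¹ - α₀ + α₁ * y - α₂ * y ^ κ)) ^ 2
          + (α₁ ^ 2 + 2 * K * M ^ 2) * (x - y) ^ 2 := by
    intro x y hy hyx
    have hx : 0 < x := lt_of_lt_of_le hy hyx
    set F : ℝ := (αm1 * x⁻¹ - α₀ + α₁ * x - α₂ * x ^ κ)
        - (αm1 * y⁻¹ - α₀ + α₁ * y - α₂ * y ^ κ) with hF_def
    set u : ℝ := x ^ κ - y ^ κ with hu_def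
    set d : ℝ := x - y with hd_def
    clear_value F u d
    have hu0 : 0 ≤ u := by
      have := Real.rpow_le_rpow hy.le hyx (by linarith : (0:ℝ) ≤ κ)
      simp only [hu_def]; linarith
    have hd0 : 0 ≤ d := by simp only [hd_def]; linarith
    have hA0 : 0 ≤ x ^ a - y ^ a := by
      have := Real.rpow_le_rpow hy.le hyx ha0.le
      linarith
    have hA : x ^ a - y ^ a ≤ δ * u + M * d := by
      rw [hu_def, hd_def]; exact hmono x y hy hyx
    -- drift bound: α₂ u ≤ α₁ d - F
    have hinv : x⁻¹ ≤ y⁻¹ := by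
      exact inv_anti₀ hy hyx
    have hB : α₂ * u ≤ α₁ * d - F := by
      have : 0 ≤ αm1 * (y⁻¹ - x⁻¹) := by
        apply mul_nonneg hm1.le; linarith
      simp only [hF_def, hu_def, hd_def]; linarith
    -- square them
    have hAsq : (x ^ a - y ^ a) ^ 2 ≤ (δ * u + M * d) ^ 2 := pow_le_pow_left₀ hA0 hA 2
    have hBsq : (α₂ * u) ^ 2 ≤ (α₁ * d - F) ^ 2 :=
      pow_le_pow_left₀ (mul_nonneg h₂.le hu0) hB 2
    have e1 : (δ * u + M * d) ^ 2 ≤ 2 * δ ^ 2 * u ^ 2 + 2 * M ^ 2 * d ^ 2 := by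
      linarith [sq_nonneg (δ * u - M * d)]
    have e2 : (α₁ * d - F) ^ 2 ≤ 2 * F ^ 2 + 2 * α₁ ^ 2 * d ^ 2 := by
      linarith [sq_nonneg (α₁ * d + F)]
    have hAsq2 : (x ^ a - y ^ a) ^ 2 ≤ 2 * δ ^ 2 * u ^ 2 + 2 * M ^ 2 * d ^ 2 :=
      le_trans hAsq e1
    have hBsq2 : α₂ ^ 2 * u ^ 2 ≤ 2 * F ^ 2 + 2 * α₁ ^ 2 * d ^ 2 := by
      have : (α₂ * u) ^ 2 = α₂ ^ 2 * u ^ 2 := by ring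
      linarith [le_trans hBsq e2]
    have hAK := mul_le_mul_of_nonneg_left hAsq2 hK.le
    have h3 : 2 * K * δ ^ 2 * u ^ 2 = α₂ ^ 2 / 2 * u ^ 2 := by
      rw [hδsq]; field_simp; ring
    linarith
  intro x y hx hy
  rcases le_total y x with h | h
  · exact key x y hy h
  · have := key y x hx h
    have e1 : (x ^ a - y ^ a) ^ 2 = (y ^ a - x ^ a) ^ 2 := by ring
    have e2 : (x - y) ^ 2 = (y - x) ^ 2 := by ring
    have e3 : ((αm1 * x⁻¹ - α₀ + α₁ * x - α₂ * x ^ κ)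
              - (αm1 * y⁻¹ - α₀ + α₁ * y - α₂ * y ^ κ))^2
        = ((αm1 * y⁻¹ - α₀ + α₁ * y - α₂ * y ^ κ)
              - (αm1 * x⁻¹ - α₀ + α₁ * x - α₂ * x ^ κ))^2 := by ring
    rw [e1, e2, e3]
    linarith
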